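/- Let D(p_i, r_i) and D(p_j, r_j) be two disjoint disks whose centers lie on a common horizontal line with p_i strictly to the left of p_j. Then the additively weighted bisector γ_ij = { q : |q p_i| - r_i = |q p_j| - r_j } is a y-monotone curve: for every real number y there exists exactly one point of γ_ij with that y-coordinate. -/

import Mathlib

open Metric Set
open scoped RealInnerProductSpace

noncomputable section

abbrev Pt : Type := EuclideanSpace ℝ (Fin 2)

/-- A closed disk in the plane, given by a center and a radius. -/
structure Disk : Type where
  center : Pt
  radius : ℝ

instance : DecidableEq Disk := Classical.decEq _

/-- The set of points of a disk (a closed ball). -/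
def Disk.pts (D : Disk) : Set Pt := Metric.closedBall D.center D.radius

/-- The signed distance from a point `q` to a disk: `|q p| - r`. -/
def Disk.sd (D : Disk) (q : Pt) : ℝ := dist q D.center - D.radius

/-- Two disks are disjoint if the distance between their centers exceeds the sum of radii. -/
def Disk.Disj (D E : Disk) : Prop := D.radius + E.radius < dist D.center E.center

/-- The union of the points of a set of disks. -/
def diskUnion (𝒟 : Set Disk) : Set Pt := ⋃ D ∈ 𝒟, D.pts

/-- The convex hull of a set of disks. -/
def diskHull (𝒟 : Set Disk) : Set Pt := convexHull ℝ (diskUnion 𝒟)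

/-- The part of the boundary circle of `D` appearing on the boundary of the convex hull
of the disks of `𝒟`. -/
def hullArc (𝒟 : Set Disk) (D : Disk) : Set Pt :=
  Metric.sphere D.center D.radius ∩ frontier (diskHull 𝒟)

/-- Convex position: every disk's boundary contributes (at least) a point to the hull boundary. -/
def ConvexPos (𝒟 : Set Disk) : Prop := ∀ D ∈ 𝒟, (hullArc 𝒟 D).Nonempty

/-- Strongly convex position: every disk's boundary contributes exactly one maximal (nonempty)
arc to the hull boundary, i.e. its trace on the hull boundary is nonempty and connected. -/
def StronglyConvexPos (𝒟 : Set Disk) : Prop := ∀ D ∈ 𝒟, IsConnected (hullArc 𝒟 D)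

/-- An independent set of disks: pairwise disjoint. -/
def IndepSet (𝒟 : Set Disk) : Prop := ∀ A ∈ 𝒟, ∀ B ∈ 𝒟, A ≠ B → A.Disj B

/-- A strongly convex independent set. -/
def StronglyConvexIndep (𝒟 : Set Disk) : Prop := StronglyConvexPos 𝒟 ∧ IndepSet 𝒟

/-- Cross product (orientation test) of `a - o` and `b - o`. -/
def cross (o a b : Pt) : ℝ := (a 0 - o 0) * (b 1 - o 1) - (a 1 - o 1) * (b 0 - o 0)

/-- `a, b, c` appear in strictly counterclockwise angular order around `o`. -/
def ccw3 (o a b c : Pt) : Prop := 0 < cross o a b ∧ 0 < cross o b c ∧ 0 < cross o c a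

/-- `Dm` lies strictly between `Da` and `Db` in the counterclockwise order of the disks
along the boundary of the convex hull of `𝒟`. -/
def CCWBetween (𝒟 : Set Disk) (Da Dm Db : Disk) : Prop :=
  ∃ o ∈ interior (diskHull 𝒟), ∀ qa ∈ hullArc 𝒟 Da, ∀ qm ∈ hullArc 𝒟 Dm,
    ∀ qb ∈ hullArc 𝒟 Db, ccw3 o qa qm qb

/-- A point regarded as a radius-zero disk. -/
def pointDisk (p : Pt) : Disk := ⟨p, 0⟩

/-- `m` is the midpoint of the circular arc `A` of a circle centered at `c`: some nonidentity
isometric involution of the plane (a reflection) fixes `c` and `m` and maps `A` onto itself. -/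
def IsArcMidpoint (c : Pt) (A : Set Pt) (m : Pt) : Prop :=
  m ∈ A ∧ ∃ f : Pt ≃ᵢ Pt, f c = c ∧ f m = m ∧ (∀ x, f (f x) = x) ∧
    f ≠ IsometryEquiv.refl Pt ∧ f '' A = A



-- sqrt(v^2+k) ≤ v + k/(2v) for v>0, k≥0
lemma sqrt_ub (v k : ℝ) (hv : 0 < v) (hk : 0 ≤ k) :
    Real.sqrt (v^2 + k) ≤ v + k/(2*v) := by
  have h1 : v^2 + k ≤ (v + k/(2*v))^2 := by
    have hvk : v * (k/(2*v)) = k/2 := by field_simp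
    nlinarith [sq_nonneg (k/(2*v))]
  calc Real.sqrt (v^2+k) ≤ Real.sqrt ((v + k/(2*v))^2) := Real.sqrt_le_sqrt h1
    _ = v + k/(2*v) := Real.sqrt_sq (by positivity)

lemma sqrt_lb (u k : ℝ) (hu : 0 ≤ u) (hk : 0 ≤ k) :
    u ≤ Real.sqrt (u^2 + k) := by
  calc u = Real.sqrt (u^2) := (Real.sqrt_sq hu).symm
    _ ≤ Real.sqrt (u^2 + k) := Real.sqrt_le_sqrt (by linarith)

-- numerator positivity
lemma num_pos (u v k : ℝ) (hk : 0 < k) (huv : v < u) :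
    v * Real.sqrt (u^2+k) < u * Real.sqrt (v^2+k) := by
  set s1 := Real.sqrt (u^2+k) with hs1def
  set s2 := Real.sqrt (v^2+k) with hs2def
  have hs1 : s1^2 = u^2+k := Real.sq_sqrt (by positivity)
  have hs2 : s2^2 = v^2+k := Real.sq_sqrt (by positivity)
  have hs1p : 0 < s1 := Real.sqrt_pos.2 (by positivity)
  have hs2p : 0 < s2 := Real.sqrt_pos.2 (by positivity)
  have key : (u*s2 - v*s1) * (u*s2 + v*s1) = k*(u-v)*(u+v) := by
    have : u^2*s2^2 - v^2*s1^2 = k*(u-v)*(u+v) := by rw [hs1, hs2]; ring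
    nlinarith [this]
  rcases le_or_gt 0 v with hv | hv
  · have hup : 0 < u := lt_of_le_of_lt hv huv
    have hsum : 0 < u*s2 + v*s1 := by positivity
    have hrhs : 0 < k*(u-v)*(u+v) := by
      apply mul_pos (mul_pos hk (by linarith)); linarith
    nlinarith [key, hsum, hrhs]
  · rcases le_or_gt 0 u with hu | hu
    · have h1 : v * s1 < 0 := mul_neg_of_neg_of_pos hv hs1p
      have h2 : 0 ≤ u * s2 := mul_nonneg hu hs2p.le
      linarith
    · have hsum : u*s2 + v*s1 < 0 := by
        have h1 : v * s1 < 0 := mul_neg_of_neg_of_pos hv hs1p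
        have h2 : u * s2 < 0 := mul_neg_of_neg_of_pos hu hs2p
        linarith
      have hrhs : k*(u-v)*(u+v) < 0 := by
        apply mul_neg_of_pos_of_neg (mul_pos hk (by linarith)); linarith
      nlinarith [key, hsum, hrhs]

lemma aux_eu (a c k d : ℝ) (hac : a < c) (hk : 0 ≤ k) (h1 : -(c-a) < d) (h2 : d < c - a) :
    ∃! x : ℝ, Real.sqrt ((x-a)^2+k) - Real.sqrt ((x-c)^2+k) = d := by
  set f : ℝ → ℝ := fun x => Real.sqrt ((x-a)^2+k) - Real.sqrt ((x-c)^2+k) with hf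
  have hcont : Continuous f := by
    apply Continuous.sub <;> exact Real.continuous_sqrt.comp (by continuity)
  -- uniqueness
  have huniq : ∀ x1 x2, f x1 = d → f x2 = d → x1 = x2 := by
    rcases hk.lt_or_eq with hkpos | hkeq
    · -- k > 0 : f is strictly monotone
      have hder : ∀ t x : ℝ, HasDerivAt (fun x => Real.sqrt ((x-t)^2+k))
          ((x-t)/Real.sqrt ((x-t)^2+k)) x := by
        intro t x
        have hpos : (0:ℝ) < (x-t)^2+k := by positivity
        have hg : HasDerivAt (fun x : ℝ => (x-t)^2+k) (2*(x-t)) x := by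
          simpa using (((hasDerivAt_id x).sub_const t).pow 2).add_const k
        have hs := (Real.hasDerivAt_sqrt (ne_of_gt hpos)).comp x hg
        refine hs.congr_deriv ?_
        have : Real.sqrt ((x-t)^2+k) ≠ 0 := by positivity
        field_simp
      have hmono : StrictMono f := by
        apply strictMono_of_deriv_pos
        intro x
        have hD : HasDerivAt f ((x-a)/Real.sqrt ((x-a)^2+k) - (x-c)/Real.sqrt ((x-c)^2+k)) x :=
          (hder a x).sub (hder c x)
        rw [hD.deriv, sub_pos]
        have hs1 : (0:ℝ) < Real.sqrt ((x-a)^2+k) := Real.sqrt_pos.2 (by positivity)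
        have hs2 : (0:ℝ) < Real.sqrt ((x-c)^2+k) := Real.sqrt_pos.2 (by positivity)
        rw [div_lt_div_iff₀ hs2 hs1]
        exact num_pos (x-a) (x-c) k hkpos (by linarith)
      intro x1 x2 e1 e2
      exact hmono.injective (e1.trans e2.symm)
    · -- k = 0 : explicit
      have hval : ∀ x, f x = d → x = (a+c+d)/2 := by
        intro x hx
        have habs : |x-a| - |x-c| = d := by
          simpa [hf, ← hkeq, Real.sqrt_sq_eq_abs] using hx
        rcases le_or_gt x a with hxa | hxa
        · rw [abs_of_nonpos (by linarith), abs_of_nonpos (by linarith)] at habs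
          linarith
        · rcases le_or_gt c x with hcx | hcx
          · rw [abs_of_nonneg (by linarith), abs_of_nonneg (by linarith)] at habs
            linarith
          · rw [abs_of_nonneg (by linarith), abs_of_nonpos (by linarith)] at habs
            linarith
      intro x1 x2 e1 e2
      rw [hval x1 e1, hval x2 e2]
  -- existence
  have hd1 : (0:ℝ) < c - a + d := by linarith
  have hd2 : (0:ℝ) < c - a - d := by linarith
  set xlo : ℝ := a - k/(2*(c-a+d)) - 1 with hxlo
  set xhi : ℝ := c + k/(2*(c-a-d)) + 1 with hxhi
  have hk1 : 0 ≤ k/(2*(c-a+d)) := by positivity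
  have hk2 : 0 ≤ k/(2*(c-a-d)) := by positivity
  have hle : xlo ≤ xhi := by simp only [hxlo, hxhi]; linarith
  have hflo : f xlo ≤ d := by
    set u : ℝ := a - xlo with hu
    have hu0 : 0 < u := by simp only [hu, hxlo]; linarith
    have e1 : Real.sqrt ((xlo-a)^2+k) ≤ u + k/(2*u) := by
      rw [show (xlo-a)^2 = u^2 by rw [hu]; ring]
      exact sqrt_ub u k hu0 hk
    have e2 : u + (c-a) ≤ Real.sqrt ((xlo-c)^2+k) := by
      rw [show (xlo-c)^2 = (u+(c-a))^2 by rw [hu]; ring]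
      exact sqrt_lb _ k (by linarith) hk
    have e3 : k/(2*u) ≤ c-a+d := by
      rw [div_le_iff₀ (by linarith)]
      have : (c-a+d) * (k/(2*(c-a+d))) = k/2 := by field_simp
      have hu' : u = k/(2*(c-a+d)) + 1 := by rw [hu, hxlo]; ring
      nlinarith
    simp only [hf]
    linarith
  have hfhi : d ≤ f xhi := by
    set v : ℝ := xhi - c with hv
    have hv0 : 0 < v := by simp only [hv, hxhi]; linarith
    have e1 : Real.sqrt ((xhi-c)^2+k) ≤ v + k/(2*v) := by
      rw [show (xhi-c)^2 = v^2 by rw [hv]]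
      exact sqrt_ub v k hv0 hk
    have e2 : v + (c-a) ≤ Real.sqrt ((xhi-a)^2+k) := by
      rw [show (xhi-a)^2 = (v+(c-a))^2 by rw [hv]; ring]
      exact sqrt_lb _ k (by linarith) hk
    have e3 : k/(2*v) ≤ c-a-d := by
      rw [div_le_iff₀ (by linarith)]
      have : (c-a-d) * (k/(2*(c-a-d))) = k/2 := by field_simp
      have hv' : v = k/(2*(c-a-d)) + 1 := by rw [hv, hxhi]; ring
      nlinarith
    simp only [hf]
    linarith
  obtain ⟨x, -, hxd⟩ := intermediate_value_Icc hle hcont.continuousOn ⟨hflo, hfhi⟩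
  exact ⟨x, hxd, fun y hy => huniq y x hy hxd⟩

lemma dist_coords (q p : Pt) :
    dist q p = Real.sqrt ((q 0 - p 0)^2 + (q 1 - p 1)^2) := by
  rw [EuclideanSpace.dist_eq]
  norm_num [Fin.sum_univ_two, Real.dist_eq, sq_abs]

def mkPt (x y : ℝ) : Pt := (WithLp.equiv 2 (Fin 2 → ℝ)).symm ![x, y]

lemma mkPt0 (x y : ℝ) : mkPt x y 0 = x := rfl
lemma mkPt1 (x y : ℝ) : mkPt x y 1 = y := rfl

/-- the additively weighted bisector of two disjoint disks with centers on a
common horizontal line is a y-monotone curve: each horizontal level contains exactly one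
point of the bisector. -/
theorem stmt2 (pi pj : Pt) (ri rj : ℝ) (hri : 0 ≤ ri) (hrj : 0 ≤ rj)
    (hy : pi 1 = pj 1) (hx : pi 0 < pj 0) (hdisj : ri + rj < dist pi pj) :
    ∀ y : ℝ, ∃! q : Pt, q 1 = y ∧ dist q pi - ri = dist q pj - rj := by
  intro y
  have hdpipj : dist pi pj = pj 0 - pi 0 := by
    rw [dist_coords, hy]
    rw [show (pi 0 - pj 0)^2 + (pj 1 - pj 1)^2 = (pj 0 - pi 0)^2 by ring]
    exact Real.sqrt_sq (by linarith)
  rw [hdpipj] at hdisj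
  have h1 : -(pj 0 - pi 0) < ri - rj := by linarith
  have h2 : ri - rj < pj 0 - pi 0 := by linarith
  obtain ⟨x, hx1, hx2⟩ :=
    aux_eu (pi 0) (pj 0) ((y - pi 1)^2) (ri - rj) hx (sq_nonneg _) h1 h2
  have hpj1 : pj 1 = pi 1 := hy.symm
  refine ⟨mkPt x y, ⟨rfl, ?_⟩, ?_⟩
  · rw [dist_coords, dist_coords, mkPt0, mkPt1, hpj1]
    linarith
  · rintro q ⟨hq1, hq2⟩
    have hfq : Real.sqrt ((q 0 - pi 0)^2 + (y - pi 1)^2)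
        - Real.sqrt ((q 0 - pj 0)^2 + (y - pi 1)^2) = ri - rj := by
      rw [dist_coords, dist_coords, hq1, hpj1] at hq2
      linarith
    have h0 := hx2 (q 0) hfq
    ext i
    fin_cases i
    · exact h0
    · exact hq1
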